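/- Let α ∈ ℝ^{e×d} (e ≥ d ≥ 1) be a non-degenerate coefficient matrix and O the associated optimization map. If m is a constraint matrix with P^α_m ≠ ∅, then P^α_{O(m)} = P^α_m and every constraint in the definition of P^α_{O(m)} is active, i.e., for every i ∈ {1,…,e} there is a point x in the closure of P^α_m with (αx)_i = O(m)̲_i, and a point y in the closure with (αy)_i = O(m)̄_i. -/

import Mathlib

open Set

/-- A constraint matrix: a pair of vectors of lower and upper bounds in `ℝ^e`. -/
abbrev CM (e : ℕ) := (Fin e → ℝ) × (Fin e → ℝ)

/-- The open polytope `P^α_m` associated with a coefficient matrix `α` and a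
constraint matrix `m`. -/
def PolySet {e d : ℕ} (α : Matrix (Fin e) (Fin d) ℝ) (m : CM e) : Set (Fin d → ℝ) :=
  {x | ∀ i, m.1 i < α.mulVec x i ∧ α.mulVec x i < m.2 i}

/-- A coefficient matrix is non-degenerate if its rows are nonzero and
pairwise non-proportional. -/
def Nondeg {e d : ℕ} (α : Matrix (Fin e) (Fin d) ℝ) : Prop :=
  (∀ i, α i ≠ 0) ∧ ∀ i j : Fin e, i ≠ j → ∀ c : ℝ, α i ≠ c • α j

/-- The set `Λ_i`: vectors `λ ∈ ℝ^e` supported on some `S` with `|S| ≤ d` which are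
the unique solution of `λᵀ α = α_i` with support in `S`. -/
def Lambda {e d : ℕ} (α : Matrix (Fin e) (Fin d) ℝ) (i : Fin e) : Set (Fin e → ℝ) :=
  {l | ∃ S : Finset (Fin e), S.card ≤ d ∧ (∀ k ∉ S, l k = 0) ∧
        (∀ j, ∑ k, l k * α k j = α i j) ∧
        ∀ l' : Fin e → ℝ, (∀ k ∉ S, l' k = 0) → (∀ j, ∑ k, l' k * α k j = α i j) → l' = l}

/-- `e̲_k(a,m)` -/
noncomputable def eLow {e : ℕ} (a : ℝ) (m : CM e) (k : Fin e) : ℝ :=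
  if 0 ≤ a then m.1 k else m.2 k

/-- `ē_k(a,m)` -/
noncomputable def eHigh {e : ℕ} (a : ℝ) (m : CM e) (k : Fin e) : ℝ :=
  if 0 ≤ a then m.2 k else m.1 k

/-- The optimized constraint matrix `O(m)`. -/
noncomputable def Opt {e d : ℕ} (α : Matrix (Fin e) (Fin d) ℝ) (m : CM e) : CM e :=
  (fun i => sSup ((fun l : Fin e → ℝ => ∑ k, l k * eLow (l k) m k) '' Lambda α i),
   fun i => sInf ((fun l : Fin e → ℝ => ∑ k, l k * eHigh (l k) m k) '' Lambda α i))

/-- Intersection constraint matrix `m ∩ m'`. -/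
def interCM {e : ℕ} (m m' : CM e) : CM e :=
  (fun i => max (m.1 i) (m'.1 i), fun i => min (m.2 i) (m'.2 i))

/-- Constraint-matrix inclusion `m ⊂ m'`. -/
def cmSub {e : ℕ} (m m' : CM e) : Prop := ∀ i, m'.1 i ≤ m.1 i ∧ m.2 i ≤ m'.2 i

namespace Stmt1

variable {d e : ℕ}

/-- The closed polytope. -/
def Qset (α : Matrix (Fin e) (Fin d) ℝ) (m : CM e) : Set (Fin d → ℝ) :=
  {x | ∀ k, m.1 k ≤ α.mulVec x k ∧ α.mulVec x k ≤ m.2 k}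

lemma mulVec_apply (α : Matrix (Fin e) (Fin d) ℝ) (x : Fin d → ℝ) (i : Fin e) :
    α.mulVec x i = ∑ j, α i j * x j := rfl

lemma continuous_mv (α : Matrix (Fin e) (Fin d) ℝ) (i : Fin e) :
    Continuous fun x : Fin d → ℝ => α.mulVec x i := by
  simp only [mulVec_apply]
  exact continuous_finset_sum _ fun j _ => continuous_const.mul (continuous_apply j)

lemma isClosed_Qset (α : Matrix (Fin e) (Fin d) ℝ) (m : CM e) : IsClosed (Qset α m) := by
  have : Qset α m = ⋂ k, {x | m.1 k ≤ α.mulVec x k} ∩ {x | α.mulVec x k ≤ m.2 k} := by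
    ext x; simp [Qset, Set.mem_iInter, forall_and]
  rw [this]
  exact isClosed_iInter fun k =>
    ((isClosed_le continuous_const (continuous_mv α k)).inter
      (isClosed_le (continuous_mv α k) continuous_const))

lemma closure_PolySet (α : Matrix (Fin e) (Fin d) ℝ) (m : CM e)
    (hne : (PolySet α m).Nonempty) : closure (PolySet α m) = Qset α m := by
  obtain ⟨x₀, hx₀⟩ := hne
  apply subset_antisymm
  · refine closure_minimal ?_ (isClosed_Qset α m)
    intro x hx k; exact ⟨(hx k).1.le, (hx k).2.le⟩
  · intro y hy
    have : Filter.Tendsto (fun n : ℕ => y + (1 / (n + 1) : ℝ) • (x₀ - y)) Filter.atTop (nhds y) := by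
      have h1 : Filter.Tendsto (fun n : ℕ => (1 / (n + 1) : ℝ)) Filter.atTop (nhds 0) :=
        tendsto_one_div_add_atTop_nhds_zero_nat
      have := (h1.smul_const (x₀ - y)).const_add y
      simpa using this
    refine mem_closure_of_tendsto this (Filter.Eventually.of_forall fun n => ?_)
    intro k
    set t : ℝ := 1 / (n + 1) with ht
    have ht0 : 0 < t := by positivity
    have ht1 : t ≤ 1 := by
      rw [ht, div_le_one (by positivity)]; linarith [Nat.cast_nonneg (α := ℝ) n]
    have hmv : α.mulVec (y + t • (x₀ - y)) k
        = (1 - t) * α.mulVec y k + t * α.mulVec x₀ k := by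
      simp [Matrix.mulVec_add, Matrix.mulVec_smul, Matrix.mulVec_sub, smul_eq_mul]
      ring
    constructor
    · rw [hmv]
      have h1 : (1 - t) * m.1 k ≤ (1 - t) * α.mulVec y k :=
        mul_le_mul_of_nonneg_left (hy k).1 (by linarith)
      have h2 : t * m.1 k < t * α.mulVec x₀ k :=
        mul_lt_mul_of_pos_left (hx₀ k).1 ht0
      nlinarith
    · rw [hmv]
      have h1 : (1 - t) * α.mulVec y k ≤ (1 - t) * m.2 k :=
        mul_le_mul_of_nonneg_left (hy k).2 (by linarith)
      have h2 : t * α.mulVec x₀ k < t * m.2 k :=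
        mul_lt_mul_of_pos_left (hx₀ k).2 ht0
      nlinarith

/-- δ_i belongs to Λ_i. -/
lemma single_mem_Lambda (hd : 1 ≤ d) (α : Matrix (Fin e) (Fin d) ℝ) (i : Fin e)
    (hrow : α i ≠ 0) : (Pi.single i 1 : Fin e → ℝ) ∈ Lambda α i := by
  have hsum : ∀ j, ∑ k, (Pi.single i 1 : Fin e → ℝ) k * α k j = α i j := by
    intro j
    rw [Finset.sum_eq_single i]
    · simp
    · intro k _ hk; simp [Pi.single_apply, hk]
    · simp
  refine ⟨{i}, by simpa using hd, ?_, hsum, ?_⟩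
  · intro k hk
    simp only [Finset.mem_singleton] at hk
    simp [Pi.single_apply, hk]
  · intro l' hsupp hl'
    obtain ⟨j₀, hj₀⟩ : ∃ j, α i j ≠ 0 := by
      by_contra h
      push_neg at h
      exact hrow (funext h)
    have h1 : l' i * α i j₀ = α i j₀ := by
      have := hl' j₀
      rwa [Finset.sum_eq_single i] at this
      · intro k _ hk
        rw [hsupp k (by simpa using hk)]; ring
      · simp
    have : l' i = 1 := by
      have := mul_right_cancel₀ hj₀ (h1.trans (one_mul (α i j₀)).symm)
      exact this
    funext k
    rcases eq_or_ne k i with rfl | hk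
    · simp [this]
    · rw [hsupp k (by simpa using hk)]
      simp [Pi.single_apply, hk]

/-- Every element of Λ_i is nonzero. -/
lemma Lambda_ne_zero {α : Matrix (Fin e) (Fin d) ℝ} {i : Fin e} (hrow : α i ≠ 0)
    {l : Fin e → ℝ} (hl : l ∈ Lambda α i) : ∃ k, l k ≠ 0 := by
  by_contra h
  push_neg at h
  obtain ⟨S, _, _, hsum, _⟩ := hl
  apply hrow
  funext j
  have := hsum j
  simp [h] at this
  exact this.symm

/-- Λ_i is finite. -/
lemma Lambda_finite (α : Matrix (Fin e) (Fin d) ℝ) (i : Fin e) : (Lambda α i).Finite := by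
  have : Lambda α i ⊆ ⋃ S : Finset (Fin e),
      {l : Fin e → ℝ | (∀ k ∉ S, l k = 0) ∧ (∀ j, ∑ k, l k * α k j = α i j) ∧
        ∀ l' : Fin e → ℝ, (∀ k ∉ S, l' k = 0) → (∀ j, ∑ k, l' k * α k j = α i j) → l' = l} := by
    rintro l ⟨S, _, h1, h2, h3⟩
    exact Set.mem_iUnion.2 ⟨S, h1, h2, h3⟩
  refine Set.Finite.subset (Set.finite_iUnion fun S => ?_) this
  apply Set.Subsingleton.finite
  rintro l ⟨h1, h2, h3⟩ l' ⟨h1', h2', h3'⟩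
  exact h3' l h1 h2

lemma term_eLow_le {a v : ℝ} (m : CM e) (k : Fin e) (h1 : m.1 k ≤ v) (h2 : v ≤ m.2 k) :
    a * eLow a m k ≤ a * v := by
  unfold eLow; split_ifs with h
  · exact mul_le_mul_of_nonneg_left h1 h
  · exact mul_le_mul_of_nonpos_left h2 (le_of_not_ge h)

lemma term_eLow_lt {a v : ℝ} (m : CM e) (k : Fin e) (ha : a ≠ 0)
    (h1 : m.1 k < v) (h2 : v < m.2 k) : a * eLow a m k < a * v := by
  unfold eLow; split_ifs with h
  · exact mul_lt_mul_of_pos_left h1 (lt_of_le_of_ne h (Ne.symm ha))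
  · exact mul_lt_mul_of_neg_left h2 (lt_of_not_ge h)

lemma term_eHigh_le {a v : ℝ} (m : CM e) (k : Fin e) (h1 : m.1 k ≤ v) (h2 : v ≤ m.2 k) :
    a * v ≤ a * eHigh a m k := by
  unfold eHigh; split_ifs with h
  · exact mul_le_mul_of_nonneg_left h2 h
  · exact mul_le_mul_of_nonpos_left h1 (le_of_not_ge h)

lemma term_eHigh_lt {a v : ℝ} (m : CM e) (k : Fin e) (ha : a ≠ 0)
    (h1 : m.1 k < v) (h2 : v < m.2 k) : a * v < a * eHigh a m k := by
  unfold eHigh; split_ifs with h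
  · exact mul_lt_mul_of_pos_left h2 (lt_of_le_of_ne h (Ne.symm ha))
  · exact mul_lt_mul_of_neg_left h1 (lt_of_not_ge h)

/-- Combination identity: if `∑ₖ l k • α k = α i` then `∑ₖ l k (α x)ₖ = (α x)ᵢ`. -/
lemma comb_mulVec {α : Matrix (Fin e) (Fin d) ℝ} {i : Fin e} {l : Fin e → ℝ}
    (hsum : ∀ j, ∑ k, l k * α k j = α i j) (x : Fin d → ℝ) :
    ∑ k, l k * α.mulVec x k = α.mulVec x i := by
  have : ∀ k, l k * α.mulVec x k = ∑ j, l k * α k j * x j := by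
    intro k
    rw [show α.mulVec x k = ∑ j, α k j * x j from rfl, Finset.mul_sum]
    exact Finset.sum_congr rfl fun j _ => by ring
  simp only [this]
  rw [Finset.sum_comm]
  rw [show α.mulVec x i = ∑ j, α i j * x j from rfl]
  refine Finset.sum_congr rfl fun j _ => ?_
  rw [← hsum j, Finset.sum_mul]

section OptFacts

variable {α : Matrix (Fin e) (Fin d) ℝ} {m : CM e} {i : Fin e}

lemma optL_mem (hd : 1 ≤ d) (hrow : α i ≠ 0) :
    ∃ l ∈ Lambda α i, ∑ k, l k * eLow (l k) m k = (Opt α m).1 i := by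
  have hfin : ((fun l : Fin e → ℝ => ∑ k, l k * eLow (l k) m k) '' Lambda α i).Finite :=
    (Lambda_finite α i).image _
  have hne : ((fun l : Fin e → ℝ => ∑ k, l k * eLow (l k) m k) '' Lambda α i).Nonempty :=
    ⟨_, Set.mem_image_of_mem _ (single_mem_Lambda hd α i hrow)⟩
  have := hne.csSup_mem hfin
  obtain ⟨l, hl, hval⟩ := this
  exact ⟨l, hl, hval⟩

lemma optU_mem (hd : 1 ≤ d) (hrow : α i ≠ 0) :
    ∃ l ∈ Lambda α i, ∑ k, l k * eHigh (l k) m k = (Opt α m).2 i := by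
  have hfin : ((fun l : Fin e → ℝ => ∑ k, l k * eHigh (l k) m k) '' Lambda α i).Finite :=
    (Lambda_finite α i).image _
  have hne : ((fun l : Fin e → ℝ => ∑ k, l k * eHigh (l k) m k) '' Lambda α i).Nonempty :=
    ⟨_, Set.mem_image_of_mem _ (single_mem_Lambda hd α i hrow)⟩
  have := hne.csInf_mem hfin
  obtain ⟨l, hl, hval⟩ := this
  exact ⟨l, hl, hval⟩

lemma optL_ge {l : Fin e → ℝ} (hl : l ∈ Lambda α i) :
    ∑ k, l k * eLow (l k) m k ≤ (Opt α m).1 i :=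
  le_csSup (((Lambda_finite α i).image _).bddAbove) (Set.mem_image_of_mem _ hl)

lemma optU_le {l : Fin e → ℝ} (hl : l ∈ Lambda α i) :
    (Opt α m).2 i ≤ ∑ k, l k * eHigh (l k) m k :=
  csInf_le (((Lambda_finite α i).image _).bddBelow) (Set.mem_image_of_mem _ hl)

lemma value_le_mv {l : Fin e → ℝ} (hl : l ∈ Lambda α i) {x : Fin d → ℝ}
    (hx : x ∈ Qset α m) : ∑ k, l k * eLow (l k) m k ≤ α.mulVec x i := by
  obtain ⟨S, _, _, hsum, _⟩ := hl
  rw [← comb_mulVec hsum x]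
  exact Finset.sum_le_sum fun k _ => term_eLow_le m k (hx k).1 (hx k).2

lemma mv_le_value {l : Fin e → ℝ} (hl : l ∈ Lambda α i) {x : Fin d → ℝ}
    (hx : x ∈ Qset α m) : α.mulVec x i ≤ ∑ k, l k * eHigh (l k) m k := by
  obtain ⟨S, _, _, hsum, _⟩ := hl
  rw [← comb_mulVec hsum x]
  exact Finset.sum_le_sum fun k _ => term_eHigh_le m k (hx k).1 (hx k).2

lemma value_lt_mv {l : Fin e → ℝ} (hrow : α i ≠ 0) (hl : l ∈ Lambda α i) {x : Fin d → ℝ}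
    (hx : x ∈ PolySet α m) : ∑ k, l k * eLow (l k) m k < α.mulVec x i := by
  obtain ⟨k₀, hk₀⟩ := Lambda_ne_zero hrow hl
  obtain ⟨S, _, _, hsum, _⟩ := hl
  rw [← comb_mulVec hsum x]
  exact Finset.sum_lt_sum (fun k _ => term_eLow_le m k (hx k).1.le (hx k).2.le)
    ⟨k₀, Finset.mem_univ _, term_eLow_lt m k₀ hk₀ (hx k₀).1 (hx k₀).2⟩

lemma mv_lt_value {l : Fin e → ℝ} (hrow : α i ≠ 0) (hl : l ∈ Lambda α i) {x : Fin d → ℝ}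
    (hx : x ∈ PolySet α m) : α.mulVec x i < ∑ k, l k * eHigh (l k) m k := by
  obtain ⟨k₀, hk₀⟩ := Lambda_ne_zero hrow hl
  obtain ⟨S, _, _, hsum, _⟩ := hl
  rw [← comb_mulVec hsum x]
  exact Finset.sum_lt_sum (fun k _ => term_eHigh_le m k (hx k).1.le (hx k).2.le)
    ⟨k₀, Finset.mem_univ _, term_eHigh_lt m k₀ hk₀ (hx k₀).1 (hx k₀).2⟩

lemma single_value_eLow : ∑ k, (Pi.single i 1 : Fin e → ℝ) k * eLow ((Pi.single i 1 : Fin e → ℝ) k) m k = m.1 i := by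
  rw [Finset.sum_eq_single i]
  · simp [eLow]
  · intro k _ hk; simp [Pi.single_apply, hk]
  · simp

lemma single_value_eHigh : ∑ k, (Pi.single i 1 : Fin e → ℝ) k * eHigh ((Pi.single i 1 : Fin e → ℝ) k) m k = m.2 i := by
  rw [Finset.sum_eq_single i]
  · simp [eHigh]
  · intro k _ hk; simp [Pi.single_apply, hk]
  · simp

lemma m1_le_optL (hd : 1 ≤ d) (hrow : α i ≠ 0) : m.1 i ≤ (Opt α m).1 i := by
  have := optL_ge (m := m) (single_mem_Lambda hd α i hrow)
  rwa [single_value_eLow] at this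

lemma optU_le_m2 (hd : 1 ≤ d) (hrow : α i ≠ 0) : (Opt α m).2 i ≤ m.2 i := by
  have := optU_le (m := m) (single_mem_Lambda hd α i hrow)
  rwa [single_value_eHigh] at this

lemma part1 (hd : 1 ≤ d) (hα : Nondeg α) :
    PolySet α (Opt α m) = PolySet α m := by
  ext x
  constructor
  · intro hx i
    refine ⟨lt_of_le_of_lt (m1_le_optL hd (hα.1 i)) (hx i).1,
      lt_of_lt_of_le (hx i).2 (optU_le_m2 hd (hα.1 i))⟩
  · intro hx i
    obtain ⟨l, hl, hval⟩ := optL_mem (m := m) hd (hα.1 i)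
    obtain ⟨l', hl', hval'⟩ := optU_mem (m := m) hd (hα.1 i)
    exact ⟨hval ▸ value_lt_mv (hα.1 i) hl hx, hval' ▸ mv_lt_value (hα.1 i) hl' hx⟩

end OptFacts
section Indep

variable {α : Matrix (Fin e) (Fin d) ℝ}

/-- Independence of the rows indexed by `S`, in coordinate form. -/
def IndepOn (α : Matrix (Fin e) (Fin d) ℝ) (S : Finset (Fin e)) : Prop :=
  ∀ g : Fin e → ℝ, (∀ k ∉ S, g k = 0) → (∀ j, ∑ k, g k * α k j = 0) → g = 0

lemma indepOn_card_le {S : Finset (Fin e)} (h : IndepOn α S) : S.card ≤ d := by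
  classical
  have hli : LinearIndependent ℝ (fun s : S => α s) := by
    rw [Fintype.linearIndependent_iff]
    intro g hg
    set gbar : Fin e → ℝ := fun k => if hk : k ∈ S then g ⟨k, hk⟩ else 0 with hgbar
    have hsupp : ∀ k ∉ S, gbar k = 0 := fun k hk => by simp [hgbar, hk]
    have hsolve : ∀ j, ∑ k, gbar k * α k j = 0 := by
      intro j
      have h1 : ∑ k, gbar k * α k j = ∑ k ∈ S, gbar k * α k j := by
        rw [← Finset.sum_subset (Finset.subset_univ S)]
        intro k _ hk
        rw [hsupp k hk]; ring
      have h2 : ∑ k ∈ S, gbar k * α k j = ∑ s : S, g s * α s j := by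
        rw [← Finset.sum_attach S (fun k => gbar k * α k j)]
        refine Finset.sum_congr rfl fun s _ => ?_
        simp [hgbar, s.2]
      have h3 : (∑ s : S, g s • α (s : Fin e)) j = 0 := by rw [hg]; rfl
      rw [h1, h2, ← h3]
      simp [Finset.sum_apply, smul_eq_mul]
    have := h gbar hsupp hsolve
    intro s
    have : gbar s = 0 := by rw [this]; rfl
    simpa [hgbar, s.2] using this
  have := hli.fintype_card_le_finrank
  simpa [Module.finrank_fin_fun] using this

lemma indepOn_unique {S : Finset (Fin e)} (h : IndepOn α S) {c : Fin d → ℝ}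
    {l l' : Fin e → ℝ} (hl : ∀ k ∉ S, l k = 0) (hl' : ∀ k ∉ S, l' k = 0)
    (hsl : ∀ j, ∑ k, l k * α k j = c j) (hsl' : ∀ j, ∑ k, l' k * α k j = c j) :
    l' = l := by
  have := h (l' - l) (fun k hk => by simp [hl k hk, hl' k hk])
    (fun j => by
      simp only [Pi.sub_apply, sub_mul, Finset.sum_sub_distrib, hsl j, hsl' j, sub_self])
  have := sub_eq_zero.1 this
  exact this

end Indep
section Cara

variable {α : Matrix (Fin e) (Fin d) ℝ}

open Classical in
/-- The support of a coefficient vector, as a finset. -/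
noncomputable def supp (l : Fin e → ℝ) : Finset (Fin e) :=
  Finset.univ.filter (fun k => l k ≠ 0)

lemma mem_supp {l : Fin e → ℝ} {k : Fin e} : k ∈ supp l ↔ l k ≠ 0 := by
  simp [supp]

/-- Conic Carathéodory with sign preservation. -/
lemma cara (c : Fin d → ℝ) :
    ∀ (l : Fin e → ℝ), (∀ j, ∑ k, l k * α k j = c j) →
    ∃ l' : Fin e → ℝ, (∀ k, (0 < l' k → 0 < l k) ∧ (l' k < 0 → l k < 0)) ∧
      (∀ j, ∑ k, l' k * α k j = c j) ∧ IndepOn α (supp l') := by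
  suffices H : ∀ n : ℕ, ∀ l : Fin e → ℝ, (supp l).card ≤ n →
      (∀ j, ∑ k, l k * α k j = c j) →
      ∃ l' : Fin e → ℝ, (∀ k, (0 < l' k → 0 < l k) ∧ (l' k < 0 → l k < 0)) ∧
        (∀ j, ∑ k, l' k * α k j = c j) ∧ IndepOn α (supp l') by
    intro l hl
    exact H (supp l).card l le_rfl hl
  intro n
  induction n with
  | zero =>
    intro l hcard hl
    refine ⟨l, fun k => ⟨fun h => h, fun h => h⟩, hl, ?_⟩
    have hsupp : supp l = ∅ := Finset.card_eq_zero.1 (Nat.le_zero.1 hcard)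
    intro g hg _
    funext k
    exact hg k (by rw [hsupp]; exact Finset.notMem_empty k)
  | succ n ih =>
    intro l hcard hl
    by_cases hindep : IndepOn α (supp l)
    · exact ⟨l, fun k => ⟨fun h => h, fun h => h⟩, hl, hindep⟩
    · -- there is a nontrivial relation supported on `supp l`
      simp only [IndepOn, not_forall] at hindep
      obtain ⟨g₀, hg₀supp, hg₀solve, hg₀ne⟩ := hindep
      have hg₀ne' : ∃ k, g₀ k ≠ 0 := by
        by_contra h
        push_neg at h
        exact hg₀ne (funext h)
      -- normalize the sign of `g` so that some ratio `l k / g k` is positive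
      obtain ⟨g, hgsupp, hgsolve, k₁, hk₁g, hk₁pos⟩ :
          ∃ g : Fin e → ℝ, (∀ k, l k = 0 → g k = 0) ∧ (∀ j, ∑ k, g k * α k j = 0) ∧
            ∃ k, g k ≠ 0 ∧ 0 < l k / g k := by
        obtain ⟨k₁, hk₁⟩ := hg₀ne'
        have hk₁supp : l k₁ ≠ 0 := by
          intro h
          exact hk₁ (hg₀supp k₁ (by simp [mem_supp, h]))
        have hsupp' : ∀ k, l k = 0 → g₀ k = 0 := fun k hk =>
          hg₀supp k (by simp [mem_supp, hk])
        rcases lt_or_gt_of_ne (div_ne_zero hk₁supp hk₁).symm with h | h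
        ·
          exact ⟨g₀, hsupp', hg₀solve, k₁, hk₁, h⟩
        · refine ⟨-g₀, fun k hk => by simp [hsupp' k hk], fun j => ?_, k₁, by simpa using hk₁, ?_⟩
          · have := hg₀solve j
            simp only [Pi.neg_apply, neg_mul, Finset.sum_neg_distrib]
            rw [this]; ring
          · simp only [Pi.neg_apply, div_neg]
            linarith
      -- pick the minimizing ratio
      classical
      set B : Finset (Fin e) := Finset.univ.filter (fun k => g k ≠ 0 ∧ 0 < l k / g k) with hB
      have hBne : B.Nonempty := ⟨k₁, by simp [hB, hk₁g, hk₁pos]⟩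
      obtain ⟨k₀, hk₀B, hk₀min⟩ := Finset.exists_min_image B (fun k => l k / g k) hBne
      simp only [hB, Finset.mem_filter] at hk₀B
      obtain ⟨-, hk₀g, hk₀pos⟩ := hk₀B
      set t : ℝ := l k₀ / g k₀ with hts
      have ht : 0 < t := hk₀pos
      set l₁ : Fin e → ℝ := fun k => l k - t * g k with hl₁
      -- sign dominance of l₁ over l
      have hsign : ∀ k, (0 < l₁ k → 0 < l k) ∧ (l₁ k < 0 → l k < 0) := by
        intro k
        by_cases hgk : g k = 0
        · simp [hl₁, hgk]
        by_cases hlk : l k = 0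
        · rw [hgsupp k hlk] at hgk; exact absurd rfl hgk
        by_cases hkB : 0 < l k / g k
        · -- k ∈ B, so t ≤ l k / g k
          have hmin : t ≤ l k / g k := hk₀min k (by simp [hB, hgk, hkB])
          rcases lt_or_gt_of_ne hgk with hneg | hpos
          · -- g k < 0 : l k / g k > 0 means l k < 0; t ≤ lk/gk ⇒ l k ≤ t * g k
            have h1 : l k ≤ t * g k := by
              rw [le_div_iff_of_neg hneg] at hmin
              linarith [hmin]
            have h2 : l k < 0 := by
              have := (div_pos_iff.1 hkB)
              rcases this with ⟨h3, h4⟩ | ⟨h3, h4⟩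
              · linarith
              · exact h3
            constructor
            · intro h; simp only [hl₁] at h; linarith
            · intro h; exact h2
          · have h1 : t * g k ≤ l k := by
              rw [le_div_iff₀ hpos] at hmin
              linarith [hmin]
            have h2 : 0 < l k := by
              have := (div_pos_iff.1 hkB)
              rcases this with ⟨h3, h4⟩ | ⟨h3, h4⟩
              · exact h3
              · linarith
            constructor
            · intro h; exact h2
            · intro h; simp only [hl₁] at h; linarith
        · -- ratio negative
          have hratio : l k / g k < 0 := by
            rcases lt_or_gt_of_ne (div_ne_zero hlk hgk) with h | h
            · exact h
            · exact absurd h hkB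
          rcases lt_or_gt_of_ne hgk with hneg | hpos
          · have h2 : 0 < l k := by
              rcases div_neg_iff.1 hratio with ⟨h3, h4⟩ | ⟨h3, h4⟩
              · exact h3
              · linarith
            constructor
            · intro h; exact h2
            · intro h
              -- l₁ k = l k - t * g k with g k < 0, t > 0 so -t*g k > 0, l₁ k > l k > 0
              simp only [hl₁] at h
              nlinarith
          · have h2 : l k < 0 := by
              rcases div_neg_iff.1 hratio with ⟨h3, h4⟩ | ⟨h3, h4⟩
              · linarith
              · linarith
            constructor
            · intro h
              simp only [hl₁] at h
              nlinarith
            · intro h; exact h2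
      -- the sum is preserved
      have hsolve₁ : ∀ j, ∑ k, l₁ k * α k j = c j := by
        intro j
        simp only [hl₁, sub_mul, Finset.sum_sub_distrib, hl j]
        have : ∑ k, t * g k * α k j = t * ∑ k, g k * α k j := by
          rw [Finset.mul_sum]
          exact Finset.sum_congr rfl fun k _ => by ring
        rw [this, hgsolve j]
        ring
      -- support decreases
      have hk₀l : l k₀ ≠ 0 := fun h => by
        rw [h, zero_div] at hts
        exact (ne_of_gt ht) hts
      have hk₀l₁ : l₁ k₀ = 0 := by
        simp only [hl₁, hts]
        field_simp
        ring
      have hsubset : supp l₁ ⊆ supp l := by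
        intro k hk
        rw [mem_supp] at hk ⊢
        intro h
        exact hk (by simp [hl₁, h, hgsupp k h])
      have hssub : supp l₁ ⊂ supp l :=
        ⟨hsubset, fun hsub => (mem_supp.1 (hsub (mem_supp.2 hk₀l))) hk₀l₁⟩
      have hcard₁ : (supp l₁).card ≤ n := by
        have := Finset.card_lt_card hssub
        omega
      obtain ⟨l', hsign', hsolve', hindep'⟩ := ih l₁ hcard₁ hsolve₁
      exact ⟨l', fun k => ⟨fun h => (hsign k).1 ((hsign' k).1 h),
        fun h => (hsign k).2 ((hsign' k).2 h)⟩, hsolve', hindep'⟩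

end Cara
section Farkas

variable {α : Matrix (Fin e) (Fin d) ℝ} {m : CM e}

/-- Sign/activity compatibility of a multiplier vector at a point `x`. -/
def Sgn (α : Matrix (Fin e) (Fin d) ℝ) (m : CM e) (x : Fin d → ℝ) (l : Fin e → ℝ) : Prop :=
  ∀ k, (0 < l k → α.mulVec x k = m.1 k) ∧ (l k < 0 → α.mulVec x k = m.2 k)

/-- Cone of sign-compatible combinations of the rows. -/
def CSet (α : Matrix (Fin e) (Fin d) ℝ) (m : CM e) (x : Fin d → ℝ) : Set (Fin d → ℝ) :=
  {v | ∃ l : Fin e → ℝ, Sgn α m x l ∧ ∀ j, v j = ∑ k, l k * α k j}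

lemma zero_mem_CSet (x : Fin d → ℝ) : (0 : Fin d → ℝ) ∈ CSet α m x :=
  ⟨0, fun k => ⟨fun h => absurd h (lt_irrefl 0), fun h => absurd h (lt_irrefl 0)⟩,
    fun j => by simp⟩

lemma smul_mem_CSet {x v : Fin d → ℝ} (hv : v ∈ CSet α m x) {t : ℝ} (ht : 0 ≤ t) :
    t • v ∈ CSet α m x := by
  obtain ⟨l, hsgn, hrep⟩ := hv
  refine ⟨t • l, fun k => ⟨fun h => ?_, fun h => ?_⟩, fun j => ?_⟩
  · apply (hsgn k).1
    simp only [Pi.smul_apply, smul_eq_mul] at h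
    rcases ht.lt_or_eq with h' | h'
    · nlinarith
    · rw [← h'] at h; simp at h
  · apply (hsgn k).2
    simp only [Pi.smul_apply, smul_eq_mul] at h
    rcases ht.lt_or_eq with h' | h'
    · nlinarith
    · rw [← h'] at h; simp at h
  · simp only [Pi.smul_apply, smul_eq_mul, hrep j, Finset.mul_sum]
    exact Finset.sum_congr rfl fun k _ => by ring

lemma add_mem_CSet {x u v : Fin d → ℝ} (hu : u ∈ CSet α m x) (hv : v ∈ CSet α m x) :
    u + v ∈ CSet α m x := by
  obtain ⟨l₁, hsgn₁, hrep₁⟩ := hu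
  obtain ⟨l₂, hsgn₂, hrep₂⟩ := hv
  refine ⟨l₁ + l₂, fun k => ⟨fun h => ?_, fun h => ?_⟩, fun j => ?_⟩
  · simp only [Pi.add_apply] at h
    rcases lt_or_ge 0 (l₁ k) with h' | h'
    · exact (hsgn₁ k).1 h'
    · exact (hsgn₂ k).1 (by linarith)
  · simp only [Pi.add_apply] at h
    rcases lt_or_ge (l₁ k) 0 with h' | h'
    · exact (hsgn₁ k).2 h'
    · exact (hsgn₂ k).2 (by linarith)
  · simp only [Pi.add_apply, hrep₁ j, hrep₂ j, add_mul, Finset.sum_add_distrib]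

lemma convex_CSet (x : Fin d → ℝ) : Convex ℝ (CSet α m x) := by
  intro u hu v hv a b ha hb _
  exact add_mem_CSet (smul_mem_CSet hu ha) (smul_mem_CSet hv hb)

/-- From a sign-compatible representation we can extract one with independent support. -/
lemma CSet_repr {x v : Fin d → ℝ} (hv : v ∈ CSet α m x) :
    ∃ l : Fin e → ℝ, Sgn α m x l ∧ (∀ j, ∑ k, l k * α k j = v j) ∧ IndepOn α (supp l) := by
  obtain ⟨l₀, hsgn₀, hrep₀⟩ := hv
  obtain ⟨l, hdom, hsolve, hindep⟩ := cara (fun j => v j) l₀ (fun j => (hrep₀ j).symm)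
  exact ⟨l, fun k => ⟨fun h => (hsgn₀ k).1 ((hdom k).1 h), fun h => (hsgn₀ k).2 ((hdom k).2 h)⟩,
    hsolve, hindep⟩

lemma isClosed_CSet (x : Fin d → ℝ) : IsClosed (CSet α m x) := by
  classical
  have hdecomp : CSet α m x = ⋃ S : Finset (Fin e),
      {v | IndepOn α S ∧ ∃ l : Fin e → ℝ, (∀ k ∉ S, l k = 0) ∧ Sgn α m x l ∧
        ∀ j, v j = ∑ k, l k * α k j} := by
    ext v
    constructor
    · intro hv
      obtain ⟨l, hsgn, hsolve, hindep⟩ := CSet_repr hv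
      exact Set.mem_iUnion.2 ⟨supp l, hindep, l,
        fun k hk => by by_contra h; exact hk (mem_supp.2 h), hsgn,
        fun j => (hsolve j).symm⟩
    · intro hv
      obtain ⟨S, -, l, -, hsgn, hrep⟩ := Set.mem_iUnion.1 hv
      exact ⟨l, hsgn, hrep⟩
  rw [hdecomp]
  apply isClosed_iUnion_of_finite
  intro S
  by_cases hindep : IndepOn α S
  · -- image of a closed set under an injective linear map from a f.d. space
    set T : (S → ℝ) →ₗ[ℝ] (Fin d → ℝ) :=
      (Matrix.of fun (j : Fin d) (s : S) => α s j).mulVecLin with hT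
    have hTinj : Function.Injective T := by
      rw [← LinearMap.ker_eq_bot]
      rw [LinearMap.ker_eq_bot']
      intro c hc
      set cbar : Fin e → ℝ := fun k => if hk : k ∈ S then c ⟨k, hk⟩ else 0 with hcbar
      have h1 : ∀ k ∉ S, cbar k = 0 := fun k hk => by simp [hcbar, hk]
      have h2 : ∀ j, ∑ k, cbar k * α k j = 0 := by
        intro j
        have e1 : ∑ k, cbar k * α k j = ∑ k ∈ S, cbar k * α k j := by
          rw [← Finset.sum_subset (Finset.subset_univ S)]
          intro k _ hk; rw [h1 k hk]; ring
        have e2 : ∑ k ∈ S, cbar k * α k j = ∑ s : S, c s * α s j := by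
          rw [← Finset.sum_attach S (fun k => cbar k * α k j)]
          exact Finset.sum_congr rfl fun s _ => by simp [hcbar, s.2]
        have e3 : T c j = 0 := by rw [hc]; rfl
        rw [e1, e2, ← e3]
        simp [hT, Matrix.mulVecLin, Matrix.mulVec, dotProduct, mul_comm]
      have := hindep cbar h1 h2
      funext s
      have : cbar s = 0 := by rw [this]; rfl
      simpa [hcbar, s.2] using this
    have hemb := LinearMap.isClosedEmbedding_of_injective
      (LinearMap.ker_eq_bot.2 hTinj)
    set V : Set (S → ℝ) :=
      {c | ∀ s : S, (0 < c s → α.mulVec x s = m.1 s) ∧ (c s < 0 → α.mulVec x s = m.2 s)} with hV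
    have hVclosed : IsClosed V := by
      have : V = ⋂ s : S, ({c : S → ℝ | 0 < c s → α.mulVec x s = m.1 s} ∩
          {c : S → ℝ | c s < 0 → α.mulVec x s = m.2 s}) := by
        ext c; simp [hV, Set.mem_iInter, forall_and]
      rw [this]
      refine isClosed_iInter fun s => IsClosed.inter ?_ ?_
      · by_cases hA : α.mulVec x s = m.1 s
        · have : {c : S → ℝ | 0 < c s → α.mulVec x s = m.1 s} = Set.univ := by
            ext c; simp [hA]
          rw [this]; exact isClosed_univ
        · have : {c : S → ℝ | 0 < c s → α.mulVec x s = m.1 s} = {c : S → ℝ | c s ≤ 0} := by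
            ext c
            simp only [Set.mem_setOf_eq]
            constructor
            · intro h; by_contra h'; exact hA (h (lt_of_not_ge h'))
            · intro h h'; linarith
          rw [this]
          exact isClosed_le (continuous_apply s) continuous_const
      · by_cases hA : α.mulVec x s = m.2 s
        · have : {c : S → ℝ | c s < 0 → α.mulVec x s = m.2 s} = Set.univ := by
            ext c; simp [hA]
          rw [this]; exact isClosed_univ
        · have : {c : S → ℝ | c s < 0 → α.mulVec x s = m.2 s} = {c : S → ℝ | 0 ≤ c s} := by
            ext c
            simp only [Set.mem_setOf_eq]
            constructor
            · intro h; by_contra h'; exact hA (h (lt_of_not_ge h'))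
            · intro h h'; linarith
          rw [this]
          exact isClosed_le continuous_const (continuous_apply s)
    have himage : {v | IndepOn α S ∧ ∃ l : Fin e → ℝ, (∀ k ∉ S, l k = 0) ∧ Sgn α m x l ∧
        ∀ j, v j = ∑ k, l k * α k j} = T '' V := by
      ext v
      constructor
      · rintro ⟨-, l, hlsupp, hsgn, hrep⟩
        refine ⟨fun s => l s, fun s => (hsgn s), ?_⟩
        funext j
        have e1 : ∑ k, l k * α k j = ∑ k ∈ S, l k * α k j := by
          rw [← Finset.sum_subset (Finset.subset_univ S)]
          intro k _ hk; rw [hlsupp k hk]; ring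
        have e2 : ∑ k ∈ S, l k * α k j = ∑ s : S, l s * α s j := by
          rw [← Finset.sum_attach S (fun k => l k * α k j), Finset.univ_eq_attach]
        show T _ j = v j
        rw [hrep j, e1, e2]
        simp [hT, Matrix.mulVecLin, Matrix.mulVec, dotProduct, mul_comm]
      · rintro ⟨c, hc, rfl⟩
        refine ⟨hindep, fun k => if hk : k ∈ S then c ⟨k, hk⟩ else 0,
          fun k hk => by simp [hk], fun k => ?_, fun j => ?_⟩
        · by_cases hk : k ∈ S
          · simpa [hk] using hc ⟨k, hk⟩
          · simp [hk]
        · have e1 : ∑ k, (if hk : k ∈ S then c ⟨k, hk⟩ else 0) * α k j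
              = ∑ k ∈ S, (if hk : k ∈ S then c ⟨k, hk⟩ else 0) * α k j := by
            rw [← Finset.sum_subset (Finset.subset_univ S)]
            intro k _ hk; simp [hk]
          have e2 : ∑ k ∈ S, (if hk : k ∈ S then c ⟨k, hk⟩ else 0) * α k j
              = ∑ s : S, c s * α s j := by
            rw [← Finset.sum_attach S]
            exact Finset.sum_congr rfl fun s _ => by simp [s.2]
          rw [e1, e2]
          simp [hT, Matrix.mulVecLin, Matrix.mulVec, dotProduct, mul_comm]
      
    rw [himage]
    exact hemb.isClosedMap V hVclosed
  · have : {v : Fin d → ℝ | IndepOn α S ∧ ∃ l : Fin e → ℝ, (∀ k ∉ S, l k = 0) ∧ Sgn α m x l ∧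
        ∀ j, v j = ∑ k, l k * α k j} = ∅ := by
      refine Set.eq_empty_iff_forall_notMem.2 ?_
      rintro v ⟨h, -⟩
      exact hindep h
    rw [this]; exact isClosed_empty

end Farkas
section FarkasMain

variable {α : Matrix (Fin e) (Fin d) ℝ} {m : CM e}

lemma farkas {x : Fin d → ℝ} (hx : x ∈ Qset α m) (c : Fin d → ℝ)
    (hmin : ∀ y ∈ Qset α m, ∑ j, c j * x j ≤ ∑ j, c j * y j) :
    ∃ l : Fin e → ℝ, Sgn α m x l ∧ (∀ j, ∑ k, l k * α k j = c j) ∧ IndepOn α (supp l) := by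
  suffices hc : c ∈ CSet α m x by
    obtain ⟨l, hsgn, hsolve, hindep⟩ := CSet_repr hc
    exact ⟨l, hsgn, fun j => (hsolve j), hindep⟩
  by_contra hc
  obtain ⟨f, u, hfa, hfc⟩ :=
    geometric_hahn_banach_closed_point (convex_CSet x) (isClosed_CSet x) hc
  have hu : 0 < u := by
    have := hfa 0 (zero_mem_CSet x)
    simpa using this
  have hfle : ∀ a ∈ CSet α m x, f a ≤ 0 := by
    intro a ha
    by_contra h
    push_neg at h
    have ht : (0:ℝ) ≤ (u + 1) / f a := le_of_lt (div_pos (by linarith) h)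
    have hmem := smul_mem_CSet ha ht
    have := hfa _ hmem
    rw [map_smul, smul_eq_mul] at this
    have hval : (u + 1) / f a * f a = u + 1 := div_mul_cancel₀ _ (ne_of_gt h)
    rw [hval] at this
    linarith
  have hfcpos : 0 < f c := lt_trans hu hfc
  -- representation of f by a vector
  set z : Fin d → ℝ := fun j => f (Pi.single j 1) with hz
  have hrepr : ∀ v : Fin d → ℝ, f v = ∑ j, v j * z j := by
    intro v
    have hv : ∑ j, v j • (Pi.single j 1 : Fin d → ℝ) = v := by
      have h1 : ∀ j, v j • (Pi.single j 1 : Fin d → ℝ) = Pi.single j (v j) := by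
        intro j; funext j'
        rcases eq_or_ne j j' with rfl | hj
        · simp
        · simp [Pi.single_apply, hj]
      simp_rw [h1]
      exact Finset.univ_sum_single v
    calc f v = f (∑ j, v j • (Pi.single j 1 : Fin d → ℝ)) := by rw [hv]
    _ = ∑ j, v j * z j := by
        rw [map_sum]
        exact Finset.sum_congr rfl fun j _ => by rw [map_smul]; simp [hz]
  -- rows active at the lower bound have f (α k) ≤ 0
  have hrow_low : ∀ k, α.mulVec x k = m.1 k → f (α k) ≤ 0 := by
    intro k hk
    refine hfle (α k) ⟨Pi.single k 1, fun k' => ⟨fun h => ?_, fun h => ?_⟩, fun j => ?_⟩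
    · rcases eq_or_ne k' k with rfl | hne
      · exact hk
      · simp [Pi.single_apply, hne] at h
    · rcases eq_or_ne k' k with rfl | hne
      · norm_num at h
      · simp [Pi.single_apply, hne] at h
    · rw [Finset.sum_eq_single k]
      · simp
      · intro k' _ hk'; simp [Pi.single_apply, hk']
      · simp
  have hrow_high : ∀ k, α.mulVec x k = m.2 k → 0 ≤ f (α k) := by
    intro k hk
    have : f (-(α k)) ≤ 0 := by
      refine hfle (-(α k)) ⟨-(Pi.single k 1), fun k' => ⟨fun h => ?_, fun h => ?_⟩, fun j => ?_⟩
      · rcases eq_or_ne k' k with rfl | hne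
        · norm_num at h
        · simp [Pi.single_apply, hne] at h
      · rcases eq_or_ne k' k with rfl | hne
        · exact hk
        · simp [Pi.single_apply, hne] at h
      · rw [Finset.sum_eq_single k]
        · simp
        · intro k' _ hk'; simp [Pi.single_apply, hk']
        · simp
    rw [map_neg] at this
    linarith
  -- moving against f decreases the objective but stays feasible
  have hmv : ∀ (t : ℝ) k, α.mulVec (x - t • z) k = α.mulVec x k - t * f (α k) := by
    intro t k
    rw [Matrix.mulVec_sub, Matrix.mulVec_smul]
    have : α.mulVec z k = f (α k) := (hrepr (α k)).symm
    simp [this, smul_eq_mul]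
  have hobj : ∀ t : ℝ, ∑ j, c j * (x - t • z) j = (∑ j, c j * x j) - t * f c := by
    intro t
    rw [hrepr c]
    rw [Finset.mul_sum, ← Finset.sum_sub_distrib]
    refine Finset.sum_congr rfl fun j _ => ?_
    simp [smul_eq_mul]
    ring
  have hev : ∀ k, ∀ᶠ t in nhdsWithin (0:ℝ) (Set.Ioi 0),
      m.1 k ≤ α.mulVec (x - t • z) k ∧ α.mulVec (x - t • z) k ≤ m.2 k := by
    intro k
    have htend : Filter.Tendsto (fun t : ℝ => α.mulVec x k - t * f (α k))
        (nhdsWithin (0:ℝ) (Set.Ioi 0)) (nhds (α.mulVec x k)) := by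
      have : Filter.Tendsto (fun t : ℝ => α.mulVec x k - t * f (α k)) (nhds 0)
          (nhds (α.mulVec x k - 0 * f (α k))) :=
        (continuous_const.sub (continuous_id.mul continuous_const)).tendsto 0
      simpa using this.mono_left nhdsWithin_le_nhds
    have hlow : ∀ᶠ t in nhdsWithin (0:ℝ) (Set.Ioi 0),
        m.1 k ≤ α.mulVec (x - t • z) k := by
      rcases eq_or_ne (α.mulVec x k) (m.1 k) with hk | hk
      · have h1 := hrow_low k hk
        refine eventually_mem_nhdsWithin.mono fun t ht => ?_
        rw [hmv t k, hk]
        have : t * f (α k) ≤ 0 := mul_nonpos_of_nonneg_of_nonpos (le_of_lt ht) h1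
        linarith
      · have h1 : m.1 k < α.mulVec x k := lt_of_le_of_ne (hx k).1 (Ne.symm hk)
        have := htend.eventually_const_lt h1
        exact this.mono fun t ht => by rw [hmv t k]; linarith
    have hhigh : ∀ᶠ t in nhdsWithin (0:ℝ) (Set.Ioi 0),
        α.mulVec (x - t • z) k ≤ m.2 k := by
      rcases eq_or_ne (α.mulVec x k) (m.2 k) with hk | hk
      · have h1 := hrow_high k hk
        refine eventually_mem_nhdsWithin.mono fun t ht => ?_
        rw [hmv t k, hk]
        have : 0 ≤ t * f (α k) := mul_nonneg (le_of_lt ht) h1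
        linarith
      · have h1 : α.mulVec x k < m.2 k := lt_of_le_of_ne (hx k).2 hk
        have := htend.eventually_lt_const h1
        exact this.mono fun t ht => by rw [hmv t k]; linarith
    exact hlow.and hhigh
  have hall : ∀ᶠ t in nhdsWithin (0:ℝ) (Set.Ioi 0), (x - t • z) ∈ Qset α m :=
    (Filter.eventually_all.2 hev).mono fun t ht k => ht k
  obtain ⟨t, hQt, ht0⟩ := (hall.and eventually_mem_nhdsWithin).exists
  have hcontr := hmin _ hQt
  rw [hobj t] at hcontr
  nlinarith [mul_pos (Set.mem_Ioi.1 ht0) hfcpos]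

end FarkasMain
section Attain

variable {α : Matrix (Fin e) (Fin d) ℝ} {m : CM e}

lemma dot_eq_zero_of_mem_span {w : Fin d → ℝ} (hw : ∀ k, ∑ j, α k j * w j = 0)
    {c : Fin d → ℝ} (hc : c ∈ Submodule.span ℝ (Set.range fun k => α k)) :
    ∑ j, c j * w j = 0 := by
  induction hc using Submodule.span_induction with
  | mem x hx =>
    obtain ⟨k, rfl⟩ := hx
    exact hw k
  | zero => simp
  | add x y hx hy ihx ihy =>
    simp only [Pi.add_apply, add_mul, Finset.sum_add_distrib, ihx, ihy, add_zero]
  | smul a x hx ih =>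
    simp only [Pi.smul_apply, smul_eq_mul, mul_assoc, ← Finset.mul_sum, ih, mul_zero]

lemma exists_min_on_Qset (hQne : (Qset α m).Nonempty) {c : Fin d → ℝ}
    (hc : c ∈ Submodule.span ℝ (Set.range fun k => α k)) :
    ∃ x ∈ Qset α m, ∀ y ∈ Qset α m, ∑ j, c j * x j ≤ ∑ j, c j * y j := by
  classical
  set R : Submodule ℝ (Fin d → ℝ) := Submodule.span ℝ (Set.range fun k => α k) with hRdef
  set W : Submodule ℝ (Fin d → ℝ) := LinearMap.ker (Matrix.mulVecLin α) with hWdef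
  have hW : ∀ w ∈ W, ∀ k, ∑ j, α k j * w j = 0 := by
    intro w hw k
    have := LinearMap.mem_ker.1 hw
    have := congrFun this k
    simpa [Matrix.mulVecLin_apply, mulVec_apply] using this
  have hWmem : ∀ w : Fin d → ℝ, (∀ k, ∑ j, α k j * w j = 0) → w ∈ W := by
    intro w hw
    rw [hWdef, LinearMap.mem_ker]
    funext k
    simpa [Matrix.mulVecLin_apply, mulVec_apply] using hw k
  have hdisj : Disjoint R W := by
    rw [Submodule.disjoint_def]
    intro v hvR hvW
    have hzero := dot_eq_zero_of_mem_span (hW v hvW) hvR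
    funext j
    have := (Finset.sum_eq_zero_iff_of_nonneg
      (fun j _ => mul_self_nonneg (v j))).1 hzero j (Finset.mem_univ j)
    exact mul_self_eq_zero.1 this
  have hR : R = LinearMap.range (Matrix.mulVecLin α.transpose) := by
    rw [Matrix.range_mulVecLin]; rfl
  have hdim : Module.finrank ℝ R + Module.finrank ℝ W = d := by
    have h1 := LinearMap.finrank_range_add_finrank_ker (Matrix.mulVecLin α)
    rw [Module.finrank_fin_fun] at h1
    have h3 := Matrix.rank_transpose α
    simp only [Matrix.rank] at h3
    have h2 : Module.finrank ℝ R
        = Module.finrank ℝ (LinearMap.range (Matrix.mulVecLin α)) := by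
      rw [hR]; exact h3
    rw [h2]
    exact h1
  have htop : R ⊔ W = ⊤ := by
    apply Submodule.eq_top_of_disjoint
    · rw [hdim, Module.finrank_fin_fun]
    · exact hdisj
  have hdecomp : ∀ x : Fin d → ℝ, ∃ r ∈ R, ∃ w ∈ W, x = r + w := by
    intro x
    have hx : x ∈ R ⊔ W := by rw [htop]; exact Submodule.mem_top
    obtain ⟨r, hr, w, hw, hrw⟩ := Submodule.mem_sup.1 hx
    exact ⟨r, hr, w, hw, hrw.symm⟩
  -- the restriction of `mulVec` to R is a closed embedding
  set g : R →ₗ[ℝ] (Fin e → ℝ) := (Matrix.mulVecLin α).comp R.subtype with hgdef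
  have hginj : LinearMap.ker g = ⊥ := by
    rw [LinearMap.ker_eq_bot']
    intro r hr
    have hrW : (r : Fin d → ℝ) ∈ W := by
      rw [hWdef, LinearMap.mem_ker]
      simpa [hgdef] using hr
    have : (r : Fin d → ℝ) = 0 := Submodule.disjoint_def.1 hdisj r r.2 hrW
    exact Subtype.ext this
  have hemb := LinearMap.isClosedEmbedding_of_injective hginj
  set K : Set (Fin e → ℝ) := Set.Icc m.1 m.2 with hKdef
  have hK : IsCompact K := isCompact_Icc
  set C : Set R := ⇑g ⁻¹' K with hCdef
  have hC : IsCompact C := hemb.isCompact_preimage hK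
  obtain ⟨x₀, hx₀⟩ := hQne
  have hmvK : ∀ x ∈ Qset α m, α.mulVec x ∈ K := by
    intro x hx
    rw [hKdef, Set.mem_Icc]
    exact ⟨fun k => (hx k).1, fun k => (hx k).2⟩
  have hCne : C.Nonempty := by
    obtain ⟨r, hr, w, hw, hx₀eq⟩ := hdecomp x₀
    refine ⟨⟨r, hr⟩, ?_⟩
    rw [hCdef, Set.mem_preimage]
    have : g ⟨r, hr⟩ = α.mulVec x₀ := by
      rw [hx₀eq]
      show α.mulVec r = α.mulVec (r + w)
      rw [Matrix.mulVec_add]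
      have : α.mulVec w = 0 := LinearMap.mem_ker.1 hw
      rw [this, add_zero]
    rw [this]
    exact hmvK x₀ hx₀
  set φ : R → ℝ := fun r => ∑ j, c j * (r : Fin d → ℝ) j with hφdef
  have hφcont : Continuous φ :=
    continuous_finset_sum _ fun j _ =>
      continuous_const.mul ((continuous_apply j).comp continuous_subtype_val)
  obtain ⟨rstar, hrstarC, hrstarmin⟩ := hC.exists_isMinOn hCne hφcont.continuousOn
  refine ⟨(rstar : Fin d → ℝ), ?_, ?_⟩
  · intro k
    have : g rstar ∈ K := hrstarC
    rw [hKdef, Set.mem_Icc] at this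
    exact ⟨this.1 k, this.2 k⟩
  · intro y hy
    obtain ⟨r, hr, w, hw, hyeq⟩ := hdecomp y
    have hrC : (⟨r, hr⟩ : R) ∈ C := by
      rw [hCdef, Set.mem_preimage]
      have : g ⟨r, hr⟩ = α.mulVec y := by
        rw [hyeq]
        show α.mulVec r = α.mulVec (r + w)
        rw [Matrix.mulVec_add]
        have : α.mulVec w = 0 := LinearMap.mem_ker.1 hw
        rw [this, add_zero]
      rw [this]
      exact hmvK y hy
    have hmin := hrstarmin hrC
    have hcy : ∑ j, c j * y j = φ ⟨r, hr⟩ := by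
      rw [hyeq, hφdef]
      simp only [Pi.add_apply, mul_add, Finset.sum_add_distrib]
      have : ∑ j, c j * w j = 0 := dot_eq_zero_of_mem_span (hW w hw) hc
      rw [this, add_zero]
    rw [hcy]
    exact hmin

end Attain
section Final

variable {α : Matrix (Fin e) (Fin d) ℝ} {m : CM e}

lemma optL_le_mv' {i : Fin e} (hd : 1 ≤ d) (hrow : α i ≠ 0) {x : Fin d → ℝ}
    (hx : x ∈ Qset α m) : (Opt α m).1 i ≤ α.mulVec x i := by
  apply csSup_le
  · exact ⟨_, Set.mem_image_of_mem _ (single_mem_Lambda hd α i hrow)⟩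
  · rintro v ⟨l, hl, rfl⟩
    exact value_le_mv hl hx

lemma mv_le_optU' {i : Fin e} (hd : 1 ≤ d) (hrow : α i ≠ 0) {x : Fin d → ℝ}
    (hx : x ∈ Qset α m) : α.mulVec x i ≤ (Opt α m).2 i := by
  apply le_csInf
  · exact ⟨_, Set.mem_image_of_mem _ (single_mem_Lambda hd α i hrow)⟩
  · rintro v ⟨l, hl, rfl⟩
    exact mv_le_value hl hx

lemma active_low (hd : 1 ≤ d) (hα : Nondeg α) (hQne : (Qset α m).Nonempty) (i : Fin e) :
    ∃ x ∈ Qset α m, α.mulVec x i = (Opt α m).1 i := by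
  have hcR : (α i) ∈ Submodule.span ℝ (Set.range fun k => α k) :=
    Submodule.subset_span ⟨i, rfl⟩
  obtain ⟨x, hxQ, hxmin⟩ := exists_min_on_Qset hQne hcR
  obtain ⟨l, hsgn, hsolve, hindep⟩ := farkas hxQ (α i) (fun y hy => hxmin y hy)
  have hsupp : ∀ k ∉ supp l, l k = 0 := fun k hk => by
    by_contra h; exact hk (mem_supp.2 h)
  have hmemΛ : l ∈ Lambda α i :=
    ⟨supp l, indepOn_card_le hindep, hsupp, hsolve,
      fun l' h1 h2 => indepOn_unique hindep hsupp h1 hsolve h2⟩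
  have hval : ∑ k, l k * eLow (l k) m k = ∑ k, l k * α.mulVec x k := by
    refine Finset.sum_congr rfl fun k _ => ?_
    rcases lt_trichotomy (l k) 0 with h | h | h
    · rw [show eLow (l k) m k = m.2 k from if_neg (not_le.2 h), (hsgn k).2 h]
    · simp [h]
    · rw [show eLow (l k) m k = m.1 k from if_pos h.le, (hsgn k).1 h]
  have hcomb : ∑ k, l k * α.mulVec x k = α.mulVec x i := comb_mulVec hsolve x
  have h1 : ∑ k, l k * eLow (l k) m k ≤ (Opt α m).1 i := optL_ge hmemΛ
  have h2 : (Opt α m).1 i ≤ α.mulVec x i := optL_le_mv' hd (hα.1 i) hxQ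
  have h3 : α.mulVec x i ≤ (Opt α m).1 i := by
    rw [← hcomb, ← hval]; exact h1
  exact ⟨x, hxQ, le_antisymm h3 h2⟩

lemma active_high (hd : 1 ≤ d) (hα : Nondeg α) (hQne : (Qset α m).Nonempty) (i : Fin e) :
    ∃ x ∈ Qset α m, α.mulVec x i = (Opt α m).2 i := by
  have hcR : (-(α i)) ∈ Submodule.span ℝ (Set.range fun k => α k) :=
    neg_mem (Submodule.subset_span ⟨i, rfl⟩)
  obtain ⟨x, hxQ, hxmin⟩ := exists_min_on_Qset hQne hcR
  obtain ⟨l₀, hsgn₀, hsolve₀, hindep₀⟩ := farkas hxQ (-(α i)) (fun y hy => hxmin y hy)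
  set l : Fin e → ℝ := -l₀ with hldef
  have hsolve : ∀ j, ∑ k, l k * α k j = α i j := by
    intro j
    have := hsolve₀ j
    simp only [hldef, Pi.neg_apply, neg_mul, Finset.sum_neg_distrib] at *
    linarith [this]
  have hsuppeq : supp l = supp l₀ := by
    apply Finset.ext
    intro k
    simp [mem_supp, hldef]
  have hindep : IndepOn α (supp l) := by rw [hsuppeq]; exact hindep₀
  have hsupp : ∀ k ∉ supp l, l k = 0 := fun k hk => by
    by_contra h; exact hk (mem_supp.2 h)
  have hmemΛ : l ∈ Lambda α i :=
    ⟨supp l, indepOn_card_le hindep, hsupp, hsolve,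
      fun l' h1 h2 => indepOn_unique hindep hsupp h1 hsolve h2⟩
  have hval : ∑ k, l k * eHigh (l k) m k = ∑ k, l k * α.mulVec x k := by
    refine Finset.sum_congr rfl fun k _ => ?_
    rcases lt_trichotomy (l k) 0 with h | h | h
    · have hl₀ : 0 < l₀ k := by
        simp only [hldef, Pi.neg_apply, neg_neg] at h ⊢
        linarith
      rw [show eHigh (l k) m k = m.1 k from if_neg (not_le.2 h), (hsgn₀ k).1 hl₀]
    · simp [h]
    · have hl₀ : l₀ k < 0 := by
        simp only [hldef, Pi.neg_apply] at h ⊢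
        linarith
      rw [show eHigh (l k) m k = m.2 k from if_pos h.le, (hsgn₀ k).2 hl₀]
  have hcomb : ∑ k, l k * α.mulVec x k = α.mulVec x i := comb_mulVec hsolve x
  have h1 : (Opt α m).2 i ≤ ∑ k, l k * eHigh (l k) m k := optU_le hmemΛ
  have h2 : α.mulVec x i ≤ (Opt α m).2 i := mv_le_optU' hd (hα.1 i) hxQ
  have h3 : (Opt α m).2 i ≤ α.mulVec x i := by
    rw [← hcomb, ← hval]; exact h1
  exact ⟨x, hxQ, le_antisymm h2 h3⟩

end Final
end Stmt1

/-- if `P^α_m` is nonempty, then `P^α_{O(m)} = P^α_m` and every constraint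
of `P^α_{O(m)}` is active. -/
theorem statement_1 {d e : ℕ} (hd : 1 ≤ d) (hde : d ≤ e)
    (α : Matrix (Fin e) (Fin d) ℝ) (hα : Nondeg α) (m : CM e)
    (hne : (PolySet α m).Nonempty) :
    PolySet α (Opt α m) = PolySet α m ∧
    ∀ i : Fin e,
      (∃ x ∈ closure (PolySet α m), α.mulVec x i = (Opt α m).1 i) ∧
      (∃ y ∈ closure (PolySet α m), α.mulVec y i = (Opt α m).2 i) := by
  obtain ⟨x₀, hx₀⟩ := hne
  have hQne : (Stmt1.Qset α m).Nonempty := ⟨x₀, fun k => ⟨(hx₀ k).1.le, (hx₀ k).2.le⟩⟩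
  have hcl := Stmt1.closure_PolySet α m ⟨x₀, hx₀⟩
  refine ⟨Stmt1.part1 hd hα, fun i => ?_⟩
  obtain ⟨x, hxQ, hxval⟩ := Stmt1.active_low hd hα hQne i
  obtain ⟨y, hyQ, hyval⟩ := Stmt1.active_high hd hα hQne i
  rw [hcl]
  exact ⟨⟨x, hxQ, hxval⟩, ⟨y, hyQ, hyval⟩⟩
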